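/- Let $0<r<1<R$, $A=\{z\in\mathbb{C}:r<|z|<R\}$, and let $\zeta:A\to\mathbb{C}$ be holomorphic and nonvanishing with winding number $\frac{1}{2\pi i}\oint_{|z|=1}\frac{\zeta'(z)}{\zeta(z)}dz=1$ along the unit circle, and let $L$ be holomorphic on $A$ with $e^{L(z)}=\zeta(z)/z$ on $A$. Suppose there exist $0<\rho_1<\rho_2$ and a holomorphic map $h$ from the annulus $W=\{\rho_1<|\zeta|<\rho_2\}$ into $A$ such that $\zeta(S^1)\subseteq W$, $\zeta(h(w))=w$ for all $w\in W$, and $h(\zeta(z))=z$ for all $|z|=1$. Define $t^{i}:=\frac{1}{2\pi i}\oint_{|z|=1}\frac{\zeta(z)^{-i}}{i}\,\frac{dz}{z}$ for integers $i\ne0$ and $t^{0}:=-\frac{1}{2\pi i}\oint_{|z|=1}L(z)\,\frac{dz}{z}$. Then $\frac{1}{2\pi i}\oint_{|z|=1}\zeta(z)\,\big(L(z)-1\big)\,\frac{dz}{z} \;=\; \sum_{i=0}^{\infty} t^{i}\,t^{-i-1}$, the series converging absolutely. (Circle integrals counterclockwise.) -/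

import Mathlib

open MeasureTheory Metric Set Complex

/-- Interchange of circle integral and tsum, under a Weierstrass M-test bound. -/
lemma circleIntegral_tsum {ι : Type*} [Countable ι] {F : ι → ℂ → ℂ} {c : ℂ} {Rr : ℝ}
    (hR : 0 ≤ Rr) (hF : ∀ i, ContinuousOn (F i) (sphere c Rr))
    {u : ι → ℝ} (hu : Summable u) (hu0 : ∀ i, 0 ≤ u i)
    (hb : ∀ i, ∀ z ∈ sphere c Rr, ‖F i z‖ ≤ u i) :
    (∮ z in C(c, Rr), ∑' i, F i z) = ∑' i, ∮ z in C(c, Rr), F i z := by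
  have hmem : ∀ θ : ℝ, circleMap c Rr θ ∈ sphere c Rr := circleMap_mem_sphere c hR
  have hGcont : ∀ i, Continuous fun θ : ℝ =>
      deriv (circleMap c Rr) θ • F i (circleMap c Rr θ) := by
    intro i
    have h1 : Continuous fun θ : ℝ => deriv (circleMap c Rr) θ := by
      simp only [deriv_circleMap]
      exact (continuous_circleMap 0 Rr).mul continuous_const
    exact h1.smul ((hF i).comp_continuous (continuous_circleMap c Rr) hmem)
  have hGb : ∀ i, ∀ θ : ℝ, ‖deriv (circleMap c Rr) θ • F i (circleMap c Rr θ)‖ ≤ Rr * u i := by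
    intro i θ
    rw [norm_smul, deriv_circleMap]
    have : ‖circleMap 0 Rr θ * Complex.I‖ = Rr := by
      simp [norm_circleMap_zero, _root_.abs_of_nonneg hR]
    rw [this]
    exact mul_le_mul_of_nonneg_left (hb i _ (hmem θ)) hR
  rw [circleIntegral_def_Icc]
  have hpt : (fun θ : ℝ => deriv (circleMap c Rr) θ • ∑' i, F i (circleMap c Rr θ))
      = fun θ : ℝ => ∑' i, deriv (circleMap c Rr) θ • F i (circleMap c Rr θ) := by
    funext θ
    simp only [smul_eq_mul]
    rw [← tsum_mul_left]
  rw [hpt]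
  rw [MeasureTheory.integral_tsum
    (fun i => ((hGcont i).aestronglyMeasurable).restrict)
    (by
      have hbound : ∀ i, (∫⁻ θ : ℝ in Icc 0 (2 * Real.pi),
          ↑‖deriv (circleMap c Rr) θ • F i (circleMap c Rr θ)‖₊)
          ≤ ENNReal.ofReal (Rr * u i) * ENNReal.ofReal (2 * Real.pi) := by
        intro i
        calc (∫⁻ θ : ℝ in Icc 0 (2 * Real.pi),
            ↑‖deriv (circleMap c Rr) θ • F i (circleMap c Rr θ)‖₊)
            ≤ ∫⁻ _ : ℝ in Icc 0 (2 * Real.pi), ENNReal.ofReal (Rr * u i) := by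
              apply MeasureTheory.lintegral_mono
              intro θ
              simp only [← enorm_eq_nnnorm, ← ofReal_norm]
              exact ENNReal.ofReal_le_ofReal (hGb i θ)
          _ = ENNReal.ofReal (Rr * u i) * volume (Icc (0:ℝ) (2 * Real.pi)) := by
              rw [MeasureTheory.lintegral_const, Measure.restrict_apply_univ]
          _ ≤ ENNReal.ofReal (Rr * u i) * ENNReal.ofReal (2 * Real.pi) := by
              rw [Real.volume_Icc]
              gcongr
              simp
      refine ne_top_of_le_ne_top ?_ (ENNReal.tsum_le_tsum hbound)
      rw [ENNReal.tsum_mul_right]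
      apply ENNReal.mul_ne_top _ ENNReal.ofReal_ne_top
      rw [← ENNReal.ofReal_tsum_of_nonneg (fun i => mul_nonneg hR (hu0 i)) (hu.mul_left Rr)]
      exact ENNReal.ofReal_ne_top)]
  congr 1
  funext i
  rw [circleIntegral_def_Icc]

lemma zpow_le_zpow_base {a x : ℝ} (ha : 0 < a) (hax : a ≤ x) {m : ℤ} (hm : 0 ≤ m) :
    a ^ m ≤ x ^ m := by
  lift m to ℕ using hm
  rw [zpow_natCast, zpow_natCast]
  exact pow_le_pow_left₀ ha.le hax m

lemma zpow_le_max {a b x : ℝ} (ha : 0 < a) (hax : a ≤ x) (hxb : x ≤ b) (m : ℤ) :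
    x ^ m ≤ max (a ^ m) (b ^ m) := by
  have hx : 0 < x := ha.trans_le hax
  rcases le_or_gt 0 m with hm | hm
  · exact le_max_of_le_right (zpow_le_zpow_base hx hxb hm)
  · refine le_max_of_le_left ?_
    have h1 : a ^ (-m) ≤ x ^ (-m) := zpow_le_zpow_base ha hax (by omega)
    have h2 : (0:ℝ) < a ^ (-m) := zpow_pos ha _
    calc x ^ m = (x ^ (-m))⁻¹ := by rw [← zpow_neg, neg_neg]
      _ ≤ (a ^ (-m))⁻¹ := by apply inv_anti₀ h2 h1
      _ = a ^ m := by rw [← zpow_neg, neg_neg]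

lemma max_zpow_nonneg {a b : ℝ} (ha : 0 < a) (m : ℤ) :
    0 ≤ max (a ^ m) (b ^ m) :=
  le_max_of_le_left (zpow_nonneg ha.le m)

lemma max_zpow_add {a b : ℝ} (ha : 0 < a) (hb : 0 < b) (m k : ℤ) :
    max (a ^ (m + k)) (b ^ (m + k)) ≤ max (a ^ m) (b ^ m) * max (a ^ k) (b ^ k) := by
  apply max_le
  · rw [zpow_add₀ ha.ne']
    exact mul_le_mul (le_max_left _ _) (le_max_left _ _) (zpow_nonneg ha.le k)
      (le_trans (zpow_nonneg ha.le m) (le_max_left _ _))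
  · rw [zpow_add₀ hb.ne']
    exact mul_le_mul (le_max_right _ _) (le_max_right _ _) (zpow_nonneg hb.le k)
      (le_trans (zpow_nonneg hb.le m) (le_max_right _ _))

open MeasureTheory Metric Set Complex

lemma annulus_isOpen (ρ₁ ρ₂ : ℝ) : IsOpen {w : ℂ | ρ₁ < ‖w‖ ∧ ‖w‖ < ρ₂} := by
  have : {w : ℂ | ρ₁ < ‖w‖ ∧ ‖w‖ < ρ₂}
      = {w : ℂ | ρ₁ < ‖w‖} ∩ {w : ℂ | ‖w‖ < ρ₂} := rfl
  rw [this]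
  exact (isOpen_lt continuous_const continuous_norm).inter
    (isOpen_lt continuous_norm continuous_const)

lemma closed_annulus_subset {ρ₁ ρ₂ a b : ℝ} (ha : ρ₁ < a) (hb : b < ρ₂) :
    closedBall (0:ℂ) b \ ball 0 a ⊆ {w : ℂ | ρ₁ < ‖w‖ ∧ ‖w‖ < ρ₂} := by
  rintro w ⟨h1, h2⟩
  rw [mem_closedBall, Complex.dist_eq, sub_zero] at h1
  rw [mem_ball, Complex.dist_eq, sub_zero] at h2
  push_neg at h2
  exact ⟨lt_of_lt_of_le ha h2, lt_of_le_of_lt h1 hb⟩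

/-- Radius independence of Laurent moments. -/
lemma laurent_radius_indep {M : ℂ → ℂ} {ρ₁ ρ₂ : ℝ} (hρ₁ : 0 < ρ₁)
    (hM : DifferentiableOn ℂ M {w : ℂ | ρ₁ < ‖w‖ ∧ ‖w‖ < ρ₂})
    {a b : ℝ} (ha : ρ₁ < a) (hab : a ≤ b) (hb : b < ρ₂) (n : ℤ) :
    (∮ w in C(0, b), M w * w ^ n) = ∮ w in C(0, a), M w * w ^ n := by
  have hsub := closed_annulus_subset (ρ₂ := ρ₂) ha hb
  have hzpow : ∀ w : ℂ, w ≠ 0 → DifferentiableAt ℂ (fun w : ℂ => w ^ n) w := by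
    intro w hw
    exact differentiableAt_zpow.mpr (Or.inl hw)
  refine Complex.circleIntegral_eq_of_differentiable_on_annulus_off_countable
    (hρ₁.trans ha) hab countable_empty ?_ ?_
  · apply ContinuousOn.mul (hM.continuousOn.mono hsub)
    intro w hw
    have hw0 : w ≠ 0 := by
      intro h0
      have := hsub hw
      rw [h0] at this
      simp at this
      linarith [this.1, hρ₁]
    exact ((hzpow w hw0).continuousAt).continuousWithinAt
  · intro w hw
    have hwmem : w ∈ {w : ℂ | ρ₁ < ‖w‖ ∧ ‖w‖ < ρ₂} := by
      apply closed_annulus_subset ha hb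
      exact ⟨ball_subset_closedBall hw.1.1, fun hc => hw.1.2 (ball_subset_closedBall hc)⟩
    have hw0 : w ≠ 0 := by
      intro h0; rw [h0] at hwmem; simp at hwmem; linarith [hwmem.1, hρ₁]
    exact (hM.differentiableAt ((annulus_isOpen ρ₁ ρ₂).mem_nhds hwmem)).mul (hzpow w hw0)

/-- Bound on Laurent coefficients. -/
lemma laurent_coeff_bound {M : ℂ → ℂ} {ρ₁ ρ₂ : ℝ} (hρ₁ : 0 < ρ₁)
    (hM : DifferentiableOn ℂ M {w : ℂ | ρ₁ < ‖w‖ ∧ ‖w‖ < ρ₂})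
    {b ρ : ℝ} (hb1 : ρ₁ < b) (hb2 : b < ρ₂) (hρ1 : ρ₁ < ρ) (hρ2 : ρ < ρ₂)
    {C : ℝ} (hC : ∀ w ∈ sphere (0:ℂ) ρ, ‖M w‖ ≤ C) (n : ℤ) :
    ‖(2 * Real.pi * Complex.I)⁻¹ * ∮ w in C(0, b), M w * w ^ (-n - 1)‖ ≤ C * ρ ^ (-n) := by
  have hρ0 : 0 < ρ := hρ₁.trans hρ1
  have hint : (∮ w in C(0, b), M w * w ^ (-n - 1)) = ∮ w in C(0, ρ), M w * w ^ (-n - 1) := by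
    rcases le_total ρ b with hh | hh
    · exact laurent_radius_indep hρ₁ hM hρ1 hh hb2 _
    · exact (laurent_radius_indep hρ₁ hM hb1 hh hρ2 _).symm
  rw [hint, norm_mul]
  have hnorm : ‖(2 * Real.pi * Complex.I)⁻¹‖ = (2 * Real.pi)⁻¹ := by
    rw [norm_inv]
    congr 1
    simp [Complex.norm_def]
    exact Real.pi_nonneg
  have hbound : ‖∮ w in C(0, ρ), M w * w ^ (-n - 1)‖ ≤ 2 * Real.pi * ρ * (C * ρ ^ (-n - 1)) := by
    apply circleIntegral.norm_integral_le_of_norm_le_const hρ0.le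
    intro w hw
    rw [mem_sphere_iff_norm, sub_zero] at hw
    rw [norm_mul]
    have : ‖w ^ (-n - 1)‖ = ρ ^ (-n - 1) := by
      rw [norm_zpow, hw]
    rw [this]
    have h0 : (0:ℝ) ≤ ρ ^ (-n - 1) := zpow_nonneg hρ0.le _
    exact mul_le_mul_of_nonneg_right (hC w (by simpa [mem_sphere_iff_norm] using hw)) h0
  rw [hnorm]
  calc (2 * Real.pi)⁻¹ * ‖∮ w in C(0, ρ), M w * w ^ (-n - 1)‖
      ≤ (2 * Real.pi)⁻¹ * (2 * Real.pi * ρ * (C * ρ ^ (-n - 1))) := by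
        apply mul_le_mul_of_nonneg_left hbound
        positivity
    _ = C * (ρ ^ (1:ℤ) * ρ ^ (-n - 1)) := by
        field_simp
    _ = C * ρ ^ (-n) := by
        rw [← zpow_add₀ hρ0.ne']
        norm_num

/-- Laurent expansion of a function holomorphic on an annulus. -/
lemma laurent_hasSum {M : ℂ → ℂ} {ρ₁ ρ₂ a b : ℝ} (hρ₁ : 0 < ρ₁)
    (hM : DifferentiableOn ℂ M {w : ℂ | ρ₁ < ‖w‖ ∧ ‖w‖ < ρ₂})
    (ha : ρ₁ < a) (hb : b < ρ₂) {w₀ : ℂ} (hw₀a : a < ‖w₀‖)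
    (hw₀b : ‖w₀‖ < b) :
    HasSum (fun n : ℤ =>
      ((2 * Real.pi * Complex.I)⁻¹ * ∮ w in C(0, b), M w * w ^ (-n - 1)) * w₀ ^ n) (M w₀) := by
  set c : ℤ → ℂ := fun n => (2 * Real.pi * Complex.I)⁻¹ * ∮ w in C(0, b), M w * w ^ (-n - 1)
    with hc_def
  have ha0 : 0 < a := hρ₁.trans ha
  have hw₀pos : 0 < ‖w₀‖ := ha0.trans hw₀a
  have hw₀0 : w₀ ≠ 0 := by
    intro h0; rw [h0] at hw₀pos; simp at hw₀pos
  have hb0 : 0 < b := hw₀pos.trans hw₀b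
  have hab : a < b := hw₀a.trans hw₀b
  have hb1 : ρ₁ < b := ha.trans hab
  have ha2 : a < ρ₂ := hab.trans hb
  have h2pi : (2 * Real.pi * Complex.I) ≠ 0 := by
    simp [Real.pi_ne_zero, Complex.I_ne_zero]
  have hW : IsOpen {w : ℂ | ρ₁ < ‖w‖ ∧ ‖w‖ < ρ₂} := annulus_isOpen ρ₁ ρ₂
  have hw₀W : w₀ ∈ {w : ℂ | ρ₁ < ‖w‖ ∧ ‖w‖ < ρ₂} :=
    ⟨ha.trans hw₀a, hw₀b.trans hb⟩
  have hsphere_sub : ∀ ρ : ℝ, ρ₁ < ρ → ρ < ρ₂ →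
      sphere (0:ℂ) ρ ⊆ {w : ℂ | ρ₁ < ‖w‖ ∧ ‖w‖ < ρ₂} := by
    intro ρ h1 h2 w hw
    rw [mem_sphere_iff_norm, sub_zero] at hw
    rw [Set.mem_setOf_eq, hw]
    exact ⟨h1, h2⟩
  have hMa : ContinuousOn M (sphere (0:ℂ) a) := hM.continuousOn.mono (hsphere_sub a ha ha2)
  have hMb : ContinuousOn M (sphere (0:ℂ) b) := hM.continuousOn.mono (hsphere_sub b hb1 hb)
  obtain ⟨Ca, hCa⟩ := (isCompact_sphere (0:ℂ) a).exists_bound_of_continuousOn hMa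
  have hCa0 : 0 ≤ Ca := by
    exact le_trans (norm_nonneg _) (hCa _ (circleMap_mem_sphere 0 ha0.le 0))
  set K : ℂ → ℂ := fun ξ => (ξ - w₀)⁻¹ * M ξ with hK_def
  have hsph_ne_w₀ : ∀ ρ : ℝ, ρ ≠ ‖w₀‖ → ∀ ξ ∈ sphere (0:ℂ) ρ, ξ - w₀ ≠ 0 := by
    intro ρ hρ ξ hξ
    rw [mem_sphere_iff_norm, sub_zero] at hξ
    intro hcon
    rw [sub_eq_zero] at hcon
    exact hρ (by rw [← hξ, hcon])
  have hKa : ContinuousOn K (sphere (0:ℂ) a) := by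
    apply ContinuousOn.mul _ hMa
    apply ContinuousOn.inv₀ ((continuous_sub_right w₀).continuousOn)
    exact hsph_ne_w₀ a (ne_of_lt hw₀a) 
  have hKb : ContinuousOn K (sphere (0:ℂ) b) := by
    apply ContinuousOn.mul _ hMb
    apply ContinuousOn.inv₀ ((continuous_sub_right w₀).continuousOn)
    exact hsph_ne_w₀ b (ne_of_gt hw₀b)
  -- Cauchy integral formula for the annulus via dslope
  have hCauchy : (∮ ξ in C(0, b), K ξ) - (∮ ξ in C(0, a), K ξ)
      = 2 * Real.pi * Complex.I * M w₀ := by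
    have hds : DifferentiableOn ℂ (dslope M w₀) {w : ℂ | ρ₁ < ‖w‖ ∧ ‖w‖ < ρ₂} :=
      (differentiableOn_dslope (hW.mem_nhds hw₀W)).mpr hM
    have heq : (∮ ξ in C(0, b), dslope M w₀ ξ) = ∮ ξ in C(0, a), dslope M w₀ ξ := by
      refine Complex.circleIntegral_eq_of_differentiable_on_annulus_off_countable
        ha0 hab.le countable_empty
        (hds.continuousOn.mono (closed_annulus_subset ha hb)) ?_
      intro ξ hξ
      refine hds.differentiableAt (hW.mem_nhds ?_)
      exact closed_annulus_subset ha hb ⟨ball_subset_closedBall hξ.1.1,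
        fun hcon => hξ.1.2 (ball_subset_closedBall hcon)⟩
    have hinta : (∮ ξ in C(0, a), (ξ - w₀)⁻¹) = 0 := by
      apply Complex.circleIntegral_eq_zero_of_differentiable_on_off_countable ha0.le
        countable_empty
      · apply ContinuousOn.inv₀ ((continuous_sub_right w₀).continuousOn)
        intro ξ hξ
        rw [mem_closedBall, Complex.dist_eq, sub_zero] at hξ
        intro hcon
        rw [sub_eq_zero] at hcon
        rw [hcon] at hξ
        exact absurd hξ (not_le.mpr hw₀a)
      · intro ξ hξ
        apply DifferentiableAt.inv (differentiableAt_id.sub_const w₀)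
        rw [sub_ne_zero]
        intro hcon
        simp only [id_eq] at hcon
        rw [hcon] at hξ
        exact absurd (mem_ball_iff_norm.mp hξ.1) (by simp; linarith)
    have hintb : (∮ ξ in C(0, b), (ξ - w₀)⁻¹) = 2 * Real.pi * Complex.I := by
      apply circleIntegral.integral_sub_inv_of_mem_ball
      rw [mem_ball, Complex.dist_eq, sub_zero]
      exact hw₀b
    have hb_split : (∮ ξ in C(0, b), dslope M w₀ ξ)
        = (∮ ξ in C(0, b), K ξ) - M w₀ * (2 * Real.pi * Complex.I) := by
      have h1 : (∮ ξ in C(0, b), dslope M w₀ ξ)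
          = ∮ ξ in C(0, b), (K ξ - M w₀ * (ξ - w₀)⁻¹) := by
        apply circleIntegral.integral_congr hb0.le
        intro ξ hξ
        have hne : ξ ≠ w₀ := by
          intro hcon
          exact (hsph_ne_w₀ b (ne_of_gt hw₀b) ξ hξ) (by rw [hcon, sub_self])
        rw [dslope_of_ne M hne, slope_def_field]
        field_simp [hK_def]
        simp only [hK_def]
        linear_combination (-M ξ) * mul_inv_cancel₀ (sub_ne_zero.mpr hne)
      rw [h1, circleIntegral.integral_sub (f := K) (g := fun ξ => M w₀ * (ξ - w₀)⁻¹)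
        (hKb.circleIntegrable hb0.le)
        (((continuousOn_const.mul (ContinuousOn.inv₀ ((continuous_sub_right w₀).continuousOn)
          (hsph_ne_w₀ b (ne_of_gt hw₀b)))).circleIntegrable hb0.le)),
        circleIntegral.integral_const_mul, hintb]
    have ha_split : (∮ ξ in C(0, a), dslope M w₀ ξ) = ∮ ξ in C(0, a), K ξ := by
      have h1 : (∮ ξ in C(0, a), dslope M w₀ ξ)
          = ∮ ξ in C(0, a), (K ξ - M w₀ * (ξ - w₀)⁻¹) := by
        apply circleIntegral.integral_congr ha0.le
        intro ξ hξ
        have hne : ξ ≠ w₀ := by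
          intro hcon
          exact (hsph_ne_w₀ a (ne_of_lt hw₀a) ξ hξ) (by rw [hcon, sub_self])
        rw [dslope_of_ne M hne, slope_def_field]
        field_simp [hK_def]
        simp only [hK_def]
        linear_combination (-M ξ) * mul_inv_cancel₀ (sub_ne_zero.mpr hne)
      rw [h1, circleIntegral.integral_sub (f := K) (g := fun ξ => M w₀ * (ξ - w₀)⁻¹)
        (hKa.circleIntegrable ha0.le)
        (((continuousOn_const.mul (ContinuousOn.inv₀ ((continuous_sub_right w₀).continuousOn)
          (hsph_ne_w₀ a (ne_of_lt hw₀a)))).circleIntegrable ha0.le)),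
        circleIntegral.integral_const_mul, hinta, mul_zero, sub_zero]
    rw [hb_split, ha_split] at heq
    linear_combination heq
  -- positive part
  have hpos : HasSum (fun n : ℕ => c n * w₀ ^ n)
      ((2 * Real.pi * Complex.I)⁻¹ * ∮ ξ in C(0, b), K ξ) := by
    have happ := hasSum_two_pi_I_cauchyPowerSeries_integral
      (f := M) (c := 0) (R := b) (w := w₀) (hMb.circleIntegrable hb0.le) hw₀b
    simp only [sub_zero, zero_add, smul_eq_mul] at happ
    have h1 : ∀ n : ℕ, (∮ z in C(0, b), (w₀ / z) ^ n * (z⁻¹ * M z))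
        = w₀ ^ n * ∮ z in C(0, b), M z * z ^ (-(n:ℤ) - 1) := by
      intro n
      rw [← circleIntegral.integral_const_mul]
      apply circleIntegral.integral_congr hb0.le
      intro z hz
      rw [mem_sphere_iff_norm, sub_zero] at hz
      have hz0 : z ≠ 0 := by
        intro h0; rw [h0] at hz; simp at hz; linarith
      show (w₀ / z) ^ n * (z⁻¹ * M z) = w₀ ^ n * (M z * z ^ (-(n:ℤ) - 1))
      have he : (-(n:ℤ) - 1) = -((n:ℤ) + 1) := by ring
      rw [he, zpow_neg]
      have he2 : ((n:ℤ) + 1) = ((n + 1 : ℕ) : ℤ) := by push_cast; ring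
      rw [he2, zpow_natCast]
      field_simp
      try ring
      try exact Or.inl trivial
      rw [inv_pow, mul_assoc (w₀ ^ n * z), mul_inv_cancel₀ (pow_ne_zero n hz0), mul_one]
    have happ2 : HasSum (fun n : ℕ => w₀ ^ n * ∮ z in C(0, b), M z * z ^ (-(n:ℤ) - 1))
        (∮ ξ in C(0, b), K ξ) := by
      have hfun : (fun n : ℕ => ∮ z in C(0, b), (w₀ / z) ^ n * (z⁻¹ * M z))
          = fun n : ℕ => w₀ ^ n * ∮ z in C(0, b), M z * z ^ (-(n:ℤ) - 1) := funext h1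
      rw [← hfun]
      exact happ
    have := happ2.div_const (2 * Real.pi * Complex.I)
    have hfun2 : (fun n : ℕ => c n * w₀ ^ n)
        = fun n : ℕ => (w₀ ^ n * ∮ z in C(0, b), M z * z ^ (-(n:ℤ) - 1))
          / (2 * Real.pi * Complex.I) := by
      funext n
      rw [hc_def]
      simp only []
      rw [div_eq_mul_inv]
      ring
    rw [hfun2]
    rw [show (2 * Real.pi * Complex.I)⁻¹ * ∮ ξ in C(0, b), K ξ = (∮ ξ in C(0, b), K ξ) / (2 * Real.pi * Complex.I) by rw [div_eq_mul_inv, mul_comm]]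
    exact this
  -- negative part
  set qa : ℝ := a / ‖w₀‖ with hqa_def
  have hqa0 : 0 ≤ qa := div_nonneg ha0.le hw₀pos.le
  have hqa1 : qa < 1 := (div_lt_one hw₀pos).mpr hw₀a
  set g : ℕ → ℂ := fun n => c (-(n:ℤ) - 1) * w₀ ^ (-(n:ℤ) - 1) with hg_def
  have hqa0' : 0 < qa := div_pos ha0 hw₀pos
  have hgbound : ∀ n : ℕ, ‖g n‖ ≤ (Ca * qa) * qa ^ n := by
    intro n
    have h1 := laurent_coeff_bound hρ₁ hM hb1 hb ha ha2 hCa (-(n:ℤ) - 1)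
    have h2 : ‖g n‖ ≤ (Ca * a ^ (-(-(n:ℤ) - 1))) * ‖w₀‖ ^ (-(n:ℤ) - 1) := by
      simp only [hg_def, hc_def]
      rw [norm_mul, norm_zpow]
      exact mul_le_mul_of_nonneg_right h1 (zpow_nonneg hw₀pos.le _)
    refine le_trans h2 (le_of_eq ?_)
    rw [show (-(-(n:ℤ) - 1)) = (n:ℤ) + 1 by ring, show (-(n:ℤ) - 1) = -((n:ℤ) + 1) by ring,
      zpow_neg, hqa_def]
    rw [show ((n:ℤ) + 1) = ((n + 1 : ℕ) : ℤ) by push_cast; ring, zpow_natCast, zpow_natCast,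
      div_pow, pow_succ]
    field_simp
    try ring
    try exact Or.inl trivial
  have hgsummable : Summable g := by
    apply Summable.of_norm_bounded ((summable_geometric_of_lt_one hqa0 hqa1).mul_left (Ca * qa))
    exact hgbound
  have hgtsum : (∮ ξ in C(0, a), K ξ) = (-(2 * Real.pi * Complex.I)) * ∑' n : ℕ, g n := by
    have hswap : (∮ ξ in C(0, a), ∑' n : ℕ, (-(w₀ ^ (-(n:ℤ) - 1)) * (M ξ * ξ ^ n)))
        = ∑' n : ℕ, ∮ ξ in C(0, a), (-(w₀ ^ (-(n:ℤ) - 1)) * (M ξ * ξ ^ n)) := by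
      apply circleIntegral_tsum (u := fun n : ℕ => (Ca / ‖w₀‖) * qa ^ n) ha0.le
      · intro n
        exact continuousOn_const.mul (hMa.mul (continuousOn_pow n))
      · exact (summable_geometric_of_lt_one hqa0 hqa1).mul_left _
      · intro n
        positivity
      · intro n ξ hξ
        rw [mem_sphere_iff_norm, sub_zero] at hξ
        have hMξ : ‖M ξ‖ ≤ Ca := hCa ξ (by rw [mem_sphere_iff_norm, sub_zero]; exact hξ)
        show ‖-(w₀ ^ (-(n:ℤ) - 1)) * (M ξ * ξ ^ n)‖ ≤ (Ca / ‖w₀‖) * qa ^ n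
        rw [norm_mul, norm_neg, norm_zpow, norm_mul, norm_pow, hξ]
        calc ‖w₀‖ ^ (-(n:ℤ) - 1) * (‖M ξ‖ * a ^ n)
            ≤ ‖w₀‖ ^ (-(n:ℤ) - 1) * (Ca * a ^ n) := by
              have h0 : (0:ℝ) ≤ ‖w₀‖ ^ (-(n:ℤ) - 1) := zpow_nonneg hw₀pos.le _
              exact mul_le_mul_of_nonneg_left
                (mul_le_mul_of_nonneg_right hMξ (pow_nonneg ha0.le n)) h0
          _ = (Ca / ‖w₀‖) * qa ^ n := by
              rw [show (-(n:ℤ) - 1) = -((n:ℤ)+1) by ring, zpow_neg,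
                zpow_add₀ hw₀pos.ne', zpow_natCast, zpow_one, hqa_def, div_pow]
              field_simp
              try ring
              try exact Or.inl trivial
    have hptwise : (∮ ξ in C(0, a), K ξ)
        = ∮ ξ in C(0, a), ∑' n : ℕ, (-(w₀ ^ (-(n:ℤ) - 1)) * (M ξ * ξ ^ n)) := by
      apply circleIntegral.integral_congr ha0.le
      intro ξ hξ
      rw [mem_sphere_iff_norm, sub_zero] at hξ
      have hratio : ‖ξ / w₀‖ < 1 := by
        rw [norm_div, hξ]
        exact (div_lt_one hw₀pos).mpr hw₀a
      have hgeo := tsum_geometric_of_norm_lt_one (ξ := ξ / w₀) hratio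
      show K ξ = ∑' n : ℕ, (-(w₀ ^ (-(n:ℤ) - 1)) * (M ξ * ξ ^ n))
      have hterm : (fun n : ℕ => (-(w₀ ^ (-(n:ℤ) - 1)) * (M ξ * ξ ^ n)))
          = fun n : ℕ => (-(w₀⁻¹) * M ξ) * (ξ / w₀) ^ n := by
        funext n
        rw [show (-(n:ℤ) - 1) = -((n:ℤ)+1) by ring, zpow_neg,
          zpow_add₀ hw₀0, zpow_natCast, zpow_one, div_pow]
        field_simp
        try ring
        try exact Or.inl (by ring)
      rw [hterm, tsum_mul_left, hgeo]
      have hξw : ξ - w₀ ≠ 0 := by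
        intro hcon
        rw [sub_eq_zero] at hcon
        rw [hcon] at hξ
        linarith
      have hw' : w₀ - ξ ≠ 0 := sub_ne_zero.mpr (Ne.symm (sub_ne_zero.mp hξw))
      rw [show (1:ℂ) - ξ / w₀ = (w₀ - ξ) / w₀ by field_simp, inv_div]
      simp only [hK_def]
      rw [div_eq_mul_inv, inv_eq_one_div (ξ - w₀), div_eq_mul_inv]
      have : (ξ - w₀)⁻¹ = -(w₀ - ξ)⁻¹ := by
        rw [← neg_sub w₀ ξ, neg_inv]
      rw [this]
      field_simp
    rw [hptwise, hswap]
    have hterm2 : ∀ n : ℕ, (∮ ξ in C(0, a), (-(w₀ ^ (-(n:ℤ) - 1)) * (M ξ * ξ ^ n)))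
        = (-(2 * Real.pi * Complex.I)) * g n := by
      intro n
      rw [circleIntegral.integral_const_mul]
      have hrad : (∮ ξ in C(0, a), M ξ * ξ ^ n) = ∮ ξ in C(0, b), M ξ * ξ ^ ((n:ℤ)) := by
        have h1 : (∮ ξ in C(0, a), M ξ * ξ ^ n) = ∮ ξ in C(0, a), M ξ * ξ ^ ((n:ℤ)) := by
          apply circleIntegral.integral_congr ha0.le
          intro ξ _
          show M ξ * ξ ^ n = M ξ * ξ ^ ((n:ℤ))
          norm_cast
        rw [h1, laurent_radius_indep hρ₁ hM ha hab.le hb]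
      have hcg : (∮ ξ in C(0, b), M ξ * ξ ^ ((n:ℤ)))
          = 2 * Real.pi * Complex.I * c (-(n:ℤ) - 1) := by
        rw [hc_def]
        simp only []
        rw [show -(-(n:ℤ) - 1) - 1 = (n:ℤ) by ring]
        rw [← mul_assoc, mul_inv_cancel₀ h2pi, one_mul]
      rw [hrad, hcg, hg_def]
      ring
    rw [tsum_congr hterm2, tsum_mul_left]
  have hneg : HasSum g (-((2 * Real.pi * Complex.I)⁻¹ * ∮ ξ in C(0, a), K ξ)) := by
    have := hgsummable.hasSum
    have hval : ∑' n : ℕ, g n = -((2 * Real.pi * Complex.I)⁻¹ * ∮ ξ in C(0, a), K ξ) := by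
      rw [hgtsum]
      field_simp
    rwa [hval] at this
  -- combine
  have hposz : HasSum (fun n : ℕ => c ((n:ℕ):ℤ) * w₀ ^ (((n:ℕ):ℤ)))
      ((2 * Real.pi * Complex.I)⁻¹ * ∮ ξ in C(0, b), K ξ) := by
    have hfx : (fun n : ℕ => c ((n:ℕ):ℤ) * w₀ ^ (((n:ℕ):ℤ))) = fun n : ℕ => c (n:ℤ) * w₀ ^ n := by
      funext n
      rw [zpow_natCast]
    rw [hfx]
    exact hpos
  have hnegz : HasSum (fun n : ℕ => c (-((n:ℤ) + 1)) * w₀ ^ (-((n:ℤ) + 1)))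
      (-((2 * Real.pi * Complex.I)⁻¹ * ∮ ξ in C(0, a), K ξ)) := by
    have hfx : (fun n : ℕ => c (-((n:ℤ) + 1)) * w₀ ^ (-((n:ℤ) + 1))) = g := by
      funext n
      rw [show -((n:ℤ) + 1) = -(n:ℤ) - 1 by ring]
    rw [hfx]
    exact hneg
  have hcomb := HasSum.of_nat_of_neg_add_one (f := fun m : ℤ => c m * w₀ ^ m) hposz hnegz
  have hval : (2 * Real.pi * Complex.I)⁻¹ * (∮ ξ in C(0, b), K ξ)
      + -((2 * Real.pi * Complex.I)⁻¹ * ∮ ξ in C(0, a), K ξ) = M w₀ := by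
    field_simp
    linear_combination hCauchy
  rw [hval] at hcomb
  simp only [hc_def] at hcomb
  exact hcomb

lemma zpow_le_zpow_base_neg {a b : ℝ} (ha : 0 < a) (hab : a ≤ b) {m : ℤ} (hm : m ≤ 0) :
    b ^ m ≤ a ^ m := by
  have hb : 0 < b := ha.trans_le hab
  have h1 : a ^ (-m) ≤ b ^ (-m) := zpow_le_zpow_base ha hab (by omega)
  have h2 : (0:ℝ) < a ^ (-m) := zpow_pos ha _
  calc b ^ m = (b ^ (-m))⁻¹ := by rw [← zpow_neg, neg_neg]
    _ ≤ (a ^ (-m))⁻¹ := by apply inv_anti₀ h2 h1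
    _ = a ^ m := by rw [← zpow_neg, neg_neg]





/-- The identity `(2πi)⁻¹ ∮_{|z|=1} ζ(z)(log(ζ(z)/z) - 1) dz/z = ∑_{i≥0} tⁱ t^{-i-1}`
underlying Proposition 2.12 (thm-FF) of Wu–Zuo, where the `tⁱ` are the flat
coordinates defined by contour integrals, `L` is a holomorphic branch of
`log(ζ(z)/z)`, and `h` is a holomorphic inverse of `ζ` on an annulus `W`
containing `ζ(S¹)`. -/
theorem stmt_16 (r R : ℝ) (hr : 0 < r) (hr1 : r < 1) (hR : 1 < R)
    (ζ L : ℂ → ℂ)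
    (hζ : DifferentiableOn ℂ ζ {z : ℂ | r < ‖z‖ ∧ ‖z‖ < R})
    (hne : ∀ z : ℂ, r < ‖z‖ → ‖z‖ < R → ζ z ≠ 0)
    (hwind : (2 * Real.pi * Complex.I)⁻¹ * (∮ z in C(0, 1), deriv ζ z / ζ z) = 1)
    (hL : DifferentiableOn ℂ L {z : ℂ | r < ‖z‖ ∧ ‖z‖ < R})
    (hexp : ∀ z : ℂ, r < ‖z‖ → ‖z‖ < R →
      Complex.exp (L z) = ζ z / z)
    (ρ₁ ρ₂ : ℝ) (hρ₁ : 0 < ρ₁) (hρ₁₂ : ρ₁ < ρ₂)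
    (h : ℂ → ℂ)
    (hh : DifferentiableOn ℂ h {w : ℂ | ρ₁ < ‖w‖ ∧ ‖w‖ < ρ₂})
    (hhA : ∀ w : ℂ, ρ₁ < ‖w‖ → ‖w‖ < ρ₂ →
      r < ‖h w‖ ∧ ‖h w‖ < R)
    (himg : ∀ z : ℂ, ‖z‖ = 1 →
      ρ₁ < ‖ζ z‖ ∧ ‖ζ z‖ < ρ₂)
    (hright : ∀ w : ℂ, ρ₁ < ‖w‖ → ‖w‖ < ρ₂ → ζ (h w) = w)
    (hleft : ∀ z : ℂ, ‖z‖ = 1 → h (ζ z) = z)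
    (t : ℤ → ℂ)
    (ht : ∀ i : ℤ, i ≠ 0 →
      t i = (2 * Real.pi * Complex.I)⁻¹ * ∮ z in C(0, 1), ζ z ^ (-i) / (i : ℂ) / z)
    (ht0 : t 0 = -((2 * Real.pi * Complex.I)⁻¹ * ∮ z in C(0, 1), L z / z)) :
    Summable (fun i : ℕ => ‖t (i : ℤ) * t (-(i : ℤ) - 1)‖) ∧
    (2 * Real.pi * Complex.I)⁻¹ * (∮ z in C(0, 1), ζ z * (L z - 1) / z)
      = ∑' i : ℕ, t (i : ℤ) * t (-(i : ℤ) - 1) := by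
  have h2pi : (2 * (Real.pi:ℂ) * Complex.I) ≠ 0 := by
    simp [Real.pi_ne_zero, Complex.I_ne_zero]
  have hA_open : IsOpen {z : ℂ | r < ‖z‖ ∧ ‖z‖ < R} := annulus_isOpen r R
  have hW_open : IsOpen {w : ℂ | ρ₁ < ‖w‖ ∧ ‖w‖ < ρ₂} := annulus_isOpen ρ₁ ρ₂
  have habs1 : ∀ z : ℂ, z ∈ sphere (0:ℂ) 1 → ‖z‖ = 1 := by
    intro z hz
    rw [mem_sphere_iff_norm, sub_zero] at hz
    rw [hz]
  have hSA : ∀ z ∈ sphere (0:ℂ) 1, r < ‖z‖ ∧ ‖z‖ < R := by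
    intro z hz
    rw [habs1 z hz]
    exact ⟨hr1, hR⟩
  have hsub_sphere : sphere (0:ℂ) 1 ⊆ {z : ℂ | r < ‖z‖ ∧ ‖z‖ < R} := hSA
  have hsz0 : ∀ z ∈ sphere (0:ℂ) 1, z ≠ 0 := by
    intro z hz h0
    rw [h0] at hz
    simp at hz
  have hζA : ∀ z : ℂ, r < ‖z‖ → ‖z‖ < R → HasDerivAt ζ (deriv ζ z) z :=
    fun z h1 h2 => (hζ.differentiableAt (hA_open.mem_nhds ⟨h1, h2⟩)).hasDerivAt
  have hLA : ∀ z : ℂ, r < ‖z‖ → ‖z‖ < R → HasDerivAt L (deriv L z) z :=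
    fun z h1 h2 => (hL.differentiableAt (hA_open.mem_nhds ⟨h1, h2⟩)).hasDerivAt
  have hA0 : ∀ z : ℂ, r < ‖z‖ → z ≠ 0 := by
    intro z h1 h0
    rw [h0] at h1
    simp at h1
    linarith
  -- the key derivative relation L' = ζ'/ζ - 1/z
  have hrel : ∀ z : ℂ, r < ‖z‖ → ‖z‖ < R →
      deriv L z = deriv ζ z / ζ z - z⁻¹ := by
    intro z h1 h2
    have hz0 : z ≠ 0 := hA0 z h1
    have hζz := hζA z h1 h2
    have hLz := hLA z h1 h2
    have hζ0 : ζ z ≠ 0 := hne z h1 h2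
    have heq : ζ =ᶠ[nhds z] fun w => w * Complex.exp (L w) := by
      filter_upwards [hA_open.mem_nhds ⟨h1, h2⟩] with w hw
      rw [hexp w hw.1 hw.2]
      field_simp [hA0 w hw.1]
    have hd2 : HasDerivAt (fun w => w * Complex.exp (L w))
        (1 * Complex.exp (L z) + z * (Complex.exp (L z) * deriv L z)) z :=
      (hasDerivAt_id z).mul hLz.cexp
    have hd1 : HasDerivAt ζ (1 * Complex.exp (L z) + z * (Complex.exp (L z) * deriv L z)) z :=
      hd2.congr_of_eventuallyEq heq
    have hde : deriv ζ z = 1 * Complex.exp (L z) + z * (Complex.exp (L z) * deriv L z) :=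
      hd1.deriv
    rw [hexp z h1 h2] at hde
    field_simp at hde ⊢
    linear_combination -hde
  -- continuity facts on the unit circle
  have hζan : AnalyticOnNhd ℂ ζ {z : ℂ | r < ‖z‖ ∧ ‖z‖ < R} :=
    hζ.analyticOnNhd hA_open
  have hLan : AnalyticOnNhd ℂ L {z : ℂ | r < ‖z‖ ∧ ‖z‖ < R} :=
    hL.analyticOnNhd hA_open
  have hζc : ContinuousOn ζ (sphere (0:ℂ) 1) := hζ.continuousOn.mono hsub_sphere
  have hLc : ContinuousOn L (sphere (0:ℂ) 1) := hL.continuousOn.mono hsub_sphere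
  have hζ'c : ContinuousOn (deriv ζ) (sphere (0:ℂ) 1) :=
    (hζan.deriv.continuousOn).mono hsub_sphere
  have hL'c : ContinuousOn (deriv L) (sphere (0:ℂ) 1) :=
    (hLan.deriv.continuousOn).mono hsub_sphere
  have hζsnz : ∀ z ∈ sphere (0:ℂ) 1, ζ z ≠ 0 :=
    fun z hz => hne z (hSA z hz).1 (hSA z hz).2
  obtain ⟨Bζ', hBζ'⟩ := (isCompact_sphere (0:ℂ) 1).exists_bound_of_continuousOn hζ'c
  obtain ⟨BL, hBL⟩ := (isCompact_sphere (0:ℂ) 1).exists_bound_of_continuousOn hLc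
  have hBζ'0 : 0 ≤ Bζ' :=
    le_trans (norm_nonneg _) (hBζ' _ (circleMap_mem_sphere 0 zero_le_one 0))
  have hBL0 : 0 ≤ BL :=
    le_trans (norm_nonneg _) (hBL _ (circleMap_mem_sphere 0 zero_le_one 0))
  -- min and max of |ζ| on the circle
  have habsζc : ContinuousOn (fun z => ‖ζ z‖) (sphere (0:ℂ) 1) :=
    continuous_norm.comp_continuousOn hζc
  obtain ⟨z₁, hz₁S, hz₁min⟩ := (isCompact_sphere (0:ℂ) 1).exists_isMinOn
    ⟨1, by simp⟩ habsζc
  obtain ⟨z₂, hz₂S, hz₂max⟩ := (isCompact_sphere (0:ℂ) 1).exists_isMaxOn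
    ⟨1, by simp⟩ habsζc
  set a' : ℝ := ‖ζ z₁‖ with ha'_def
  set b' : ℝ := ‖ζ z₂‖ with hb'_def
  have ha'ρ : ρ₁ < a' := (himg z₁ (habs1 z₁ hz₁S)).1
  have hb'ρ : b' < ρ₂ := (himg z₂ (habs1 z₂ hz₂S)).2
  have ha'0 : 0 < a' := hρ₁.trans ha'ρ
  have hbounds : ∀ z ∈ sphere (0:ℂ) 1, a' ≤ ‖ζ z‖ ∧ ‖ζ z‖ ≤ b' :=
    fun z hz => ⟨hz₁min hz, hz₂max hz⟩
  have ha'b' : a' ≤ b' := (hbounds z₁ hz₁S).2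
  have hb'0 : 0 < b' := ha'0.trans_le ha'b'
  obtain ⟨aa, haaρ, haa'⟩ : ∃ aa : ℝ, ρ₁ < aa ∧ aa < a' :=
    ⟨(ρ₁ + a') / 2, by linarith, by linarith⟩
  obtain ⟨bb, hb'b, hbbρ⟩ : ∃ bb : ℝ, b' < bb ∧ bb < ρ₂ :=
    ⟨(b' + ρ₂) / 2, by linarith, by linarith⟩
  have haa0 : 0 < aa := hρ₁.trans haaρ
  have hbb0 : 0 < bb := hb'0.trans hb'b
  have haaρ₂ : aa < ρ₂ := by
    have h1 : a' < ρ₂ := lt_of_le_of_lt ha'b' hb'ρ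
    linarith
  have hbbρ₁ : ρ₁ < bb := by
    have h1 : ρ₁ < b' := lt_of_lt_of_le ha'ρ ha'b'
    linarith
  -- the composed map M = L ∘ h on the annulus W, and its Laurent coefficients
  set M : ℂ → ℂ := fun w => L (h w) with hM_def
  have hM : DifferentiableOn ℂ M {w : ℂ | ρ₁ < ‖w‖ ∧ ‖w‖ < ρ₂} := by
    apply hL.comp hh
    intro w hw
    exact hhA w hw.1 hw.2
  obtain ⟨c, hc_def⟩ : ∃ c : ℤ → ℂ,
      c = fun n => (2 * Real.pi * Complex.I)⁻¹ * ∮ w in C(0, bb), M w * w ^ (-n - 1) := ⟨_, rfl⟩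
  have hLaurent : ∀ z ∈ sphere (0:ℂ) 1, HasSum (fun n : ℤ => c n * (ζ z) ^ n) (L z) := by
    intro z hz
    have h1 := laurent_hasSum hρ₁ hM haaρ hbbρ (w₀ := ζ z)
      (lt_of_lt_of_le haa' (hbounds z hz).1) (lt_of_le_of_lt (hbounds z hz).2 hb'b)
    have h2 : M (ζ z) = L z := by
      rw [hM_def]
      simp only []
      rw [hleft z (habs1 z hz)]
    rw [h2] at h1
    simp only [hc_def]
    exact h1
  -- bounds on Laurent coefficients
  have hsphW : ∀ ρ : ℝ, ρ₁ < ρ → ρ < ρ₂ →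
      sphere (0:ℂ) ρ ⊆ {w : ℂ | ρ₁ < ‖w‖ ∧ ‖w‖ < ρ₂} := by
    intro ρ h1 h2 w hw
    rw [mem_sphere_iff_norm, sub_zero] at hw
    rw [Set.mem_setOf_eq, hw]
    exact ⟨h1, h2⟩
  obtain ⟨Ca, hCa⟩ := (isCompact_sphere (0:ℂ) aa).exists_bound_of_continuousOn
    (hM.continuousOn.mono (hsphW aa haaρ haaρ₂))
  obtain ⟨Cb, hCb⟩ := (isCompact_sphere (0:ℂ) bb).exists_bound_of_continuousOn
    (hM.continuousOn.mono (hsphW bb hbbρ₁ hbbρ))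
  have hCa0 : 0 ≤ Ca :=
    le_trans (norm_nonneg _) (hCa _ (circleMap_mem_sphere 0 haa0.le 0))
  have hCb0 : 0 ≤ Cb :=
    le_trans (norm_nonneg _) (hCb _ (circleMap_mem_sphere 0 hbb0.le 0))
  have hc_le_a : ∀ n : ℤ, ‖c n‖ ≤ Ca * aa ^ (-n) := by
    intro n
    simp only [hc_def]
    exact laurent_coeff_bound hρ₁ hM hbbρ₁ hbbρ haaρ haaρ₂ hCa n
  have hc_le_b : ∀ n : ℤ, ‖c n‖ ≤ Cb * bb ^ (-n) := by
    intro n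
    simp only [hc_def]
    exact laurent_coeff_bound hρ₁ hM hbbρ₁ hbbρ hbbρ₁ hbbρ hCb n
  -- the central summability estimate
  have hq1 : b' / bb < 1 := (div_lt_one hbb0).mpr hb'b
  have hq10 : 0 ≤ b' / bb := div_nonneg hb'0.le hbb0.le
  have hq2 : aa / a' < 1 := (div_lt_one ha'0).mpr haa'
  have hq20 : 0 ≤ aa / a' := div_nonneg haa0.le ha'0.le
  have hsum_c : Summable (fun n : ℤ => ‖c n‖ * max (a' ^ n) (b' ^ n)) := by
    apply Summable.of_nat_of_neg
    · refine Summable.of_nonneg_of_le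
        (fun n => mul_nonneg (norm_nonneg _) (max_zpow_nonneg ha'0 _)) (fun n => ?_)
        ((summable_geometric_of_lt_one hq10 hq1).mul_left Cb)
      have hmax : max (a' ^ ((n:ℕ):ℤ)) (b' ^ ((n:ℕ):ℤ)) = b' ^ ((n:ℕ):ℤ) :=
        max_eq_right (zpow_le_zpow_base ha'0 ha'b' (by positivity))
      rw [hmax]
      calc ‖c ((n:ℕ):ℤ)‖ * b' ^ ((n:ℕ):ℤ)
          ≤ (Cb * bb ^ (-((n:ℕ):ℤ))) * b' ^ ((n:ℕ):ℤ) :=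
            mul_le_mul_of_nonneg_right (hc_le_b _) (zpow_nonneg hb'0.le _)
        _ = Cb * (b' / bb) ^ n := by
            rw [zpow_neg, zpow_natCast, zpow_natCast, div_pow, div_eq_mul_inv]
            ring
    · refine Summable.of_nonneg_of_le
        (fun n => mul_nonneg (norm_nonneg _) (max_zpow_nonneg ha'0 _)) (fun n => ?_)
        ((summable_geometric_of_lt_one hq20 hq2).mul_left Ca)
      have hmax : max (a' ^ (-((n:ℕ):ℤ))) (b' ^ (-((n:ℕ):ℤ))) = a' ^ (-((n:ℕ):ℤ)) :=
        max_eq_left (zpow_le_zpow_base_neg ha'0 ha'b' (by omega))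
      rw [hmax]
      calc ‖c (-((n:ℕ):ℤ))‖ * a' ^ (-((n:ℕ):ℤ))
          ≤ (Ca * aa ^ (-(-((n:ℕ):ℤ)))) * a' ^ (-((n:ℕ):ℤ)) :=
            mul_le_mul_of_nonneg_right (hc_le_a _) (zpow_nonneg ha'0.le _)
        _ = Ca * (aa / a') ^ n := by
            rw [neg_neg, zpow_neg, zpow_natCast, zpow_natCast, div_pow, div_eq_mul_inv]
            ring
    -- moment integrals of ζ^k ζ'
  have hzpd : ∀ (m : ℤ), ∀ z ∈ sphere (0:ℂ) 1,
      HasDerivAt (fun w => ζ w ^ m) ((m:ℂ) * ζ z ^ (m - 1) * deriv ζ z) z := by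
    intro m z hz
    have h1 := (hasDerivAt_zpow m (ζ z) (Or.inl (hζsnz z hz))).comp z
      (hζA z (hSA z hz).1 (hSA z hz).2)
    simpa [Function.comp_def, mul_assoc] using h1
  have hζikc : ∀ m : ℤ, ContinuousOn (fun z => ζ z ^ m) (sphere (0:ℂ) 1) :=
    fun m => hζc.zpow₀ m (fun z hz => Or.inl (hζsnz z hz))
  have hmomδ : ∀ k : ℤ, (∮ z in C(0, 1), ζ z ^ k * deriv ζ z)
      = if k = -1 then 2 * Real.pi * Complex.I else 0 := by
    intro k
    by_cases hk : k = -1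
    · subst hk
      rw [if_pos rfl]
      have h1 : (∮ z in C(0, 1), ζ z ^ (-1:ℤ) * deriv ζ z)
          = ∮ z in C(0, 1), deriv ζ z / ζ z := by
        apply circleIntegral.integral_congr zero_le_one
        intro z _
        show ζ z ^ (-1:ℤ) * deriv ζ z = deriv ζ z / ζ z
        rw [zpow_neg_one, div_eq_mul_inv, mul_comm]
      rw [h1]
      exact ((inv_mul_eq_one₀ h2pi).mp hwind).symm
    · rw [if_neg hk]
      have hcast : ((k:ℂ) + 1) ≠ 0 := by
        have h1 : ((k + 1 : ℤ) : ℂ) ≠ 0 := Int.cast_ne_zero.mpr (by omega)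
        push_cast at h1
        exact h1
      apply circleIntegral.integral_eq_zero_of_hasDerivWithinAt
        (f := fun z => ζ z ^ (k + 1) / ((k:ℂ) + 1)) zero_le_one
      intro z hz
      apply HasDerivAt.hasDerivWithinAt
      have hd := (hzpd (k + 1) z hz).div_const ((k:ℂ) + 1)
      refine hd.congr_deriv ?_
      symm
      rw [show k + 1 - 1 = k by ring]
      push_cast
      field_simp
  -- key1 : circle moments of ζ^k ζ' L give Laurent coefficients
  have key1 : ∀ k : ℤ, (∮ z in C(0, 1), ζ z ^ k * deriv ζ z * L z)
      = 2 * Real.pi * Complex.I * c (-k - 1) := by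
    intro k
    have hcongr : (∮ z in C(0, 1), ζ z ^ k * deriv ζ z * L z)
        = ∮ z in C(0, 1), ∑' n : ℤ, (c n * (ζ z ^ (n + k) * deriv ζ z)) := by
      apply circleIntegral.integral_congr zero_le_one
      intro z hz
      show ζ z ^ k * deriv ζ z * L z = ∑' n : ℤ, (c n * (ζ z ^ (n + k) * deriv ζ z))
      have hs := ((hLaurent z hz).mul_right (ζ z ^ k * deriv ζ z)).tsum_eq
      have hfx : (fun n : ℤ => c n * ζ z ^ n * (ζ z ^ k * deriv ζ z))
          = fun n : ℤ => c n * (ζ z ^ (n + k) * deriv ζ z) := by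
        funext n
        rw [zpow_add₀ (hζsnz z hz)]
        ring
      rw [← hfx, hs]
      ring
    rw [hcongr]
    rw [circleIntegral_tsum (F := fun n z => c n * (ζ z ^ (n + k) * deriv ζ z))
        (u := fun n : ℤ => (‖c n‖ * max (a' ^ n) (b' ^ n))
        * (max (a' ^ k) (b' ^ k) * Bζ')) zero_le_one
      (fun n => continuousOn_const.mul ((hζikc (n + k)).mul hζ'c))
      (hsum_c.mul_right _)
      (fun n => mul_nonneg (mul_nonneg (norm_nonneg _) (max_zpow_nonneg ha'0 _))
        (mul_nonneg (max_zpow_nonneg ha'0 _) hBζ'0))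
      ?_]
    · have hterm : ∀ n : ℤ, (∮ z in C(0, 1), c n * (ζ z ^ (n + k) * deriv ζ z))
          = c n * (if n + k = -1 then 2 * Real.pi * Complex.I else 0) := by
        intro n
        rw [circleIntegral.integral_const_mul, hmomδ (n + k)]
      rw [tsum_congr hterm, tsum_eq_single (-k - 1) ?_]
      · rw [if_pos (by ring)]
        ring
      · intro n hn
        rw [if_neg (by omega), mul_zero]
    · intro n z hz
      have hb1 := (hbounds z hz).1
      have hb2 := (hbounds z hz).2
      rw [norm_mul, norm_mul, norm_zpow]
      have h1 : ‖ζ z‖ ^ (n + k) ≤ max (a' ^ (n + k)) (b' ^ (n + k)) := by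
        exact zpow_le_max ha'0 hb1 hb2 _
      have h2 : max (a' ^ (n + k)) (b' ^ (n + k)) ≤ max (a' ^ n) (b' ^ n) * max (a' ^ k) (b' ^ k) :=
        max_zpow_add ha'0 hb'0 n k
      calc ‖c n‖ * (‖ζ z‖ ^ (n + k) * ‖deriv ζ z‖)
          ≤ ‖c n‖ * ((max (a' ^ n) (b' ^ n) * max (a' ^ k) (b' ^ k)) * Bζ') := by
            apply mul_le_mul_of_nonneg_left _ (norm_nonneg _)
            apply mul_le_mul (h1.trans h2) (hBζ' z hz) (norm_nonneg _)
            exact mul_nonneg (max_zpow_nonneg ha'0 _) (max_zpow_nonneg ha'0 _)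
        _ = (‖c n‖ * max (a' ^ n) (b' ^ n)) * (max (a' ^ k) (b' ^ k) * Bζ') := by ring
  -- key2 : the quadratic integral
  have key2 : (∮ z in C(0, 1), deriv ζ z * L z ^ 2)
      = 2 * Real.pi * Complex.I * ∑' n : ℤ, c n * c (-n - 1) := by
    have hcongr : (∮ z in C(0, 1), deriv ζ z * L z ^ 2)
        = ∮ z in C(0, 1), ∑' n : ℤ, (c n * (ζ z ^ n * (deriv ζ z * L z))) := by
      apply circleIntegral.integral_congr zero_le_one
      intro z hz
      show deriv ζ z * L z ^ 2 = ∑' n : ℤ, (c n * (ζ z ^ n * (deriv ζ z * L z)))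
      have hs := ((hLaurent z hz).mul_right (deriv ζ z * L z)).tsum_eq
      have hfx : (fun n : ℤ => c n * ζ z ^ n * (deriv ζ z * L z))
          = fun n : ℤ => c n * (ζ z ^ n * (deriv ζ z * L z)) := by
        funext n
        ring
      rw [← hfx, hs]
      ring
    rw [hcongr]
    rw [circleIntegral_tsum (F := fun n z => c n * (ζ z ^ n * (deriv ζ z * L z)))
        (u := fun n : ℤ => (‖c n‖ * max (a' ^ n) (b' ^ n)) * (Bζ' * BL))
        zero_le_one
      (fun n => continuousOn_const.mul ((hζikc n).mul (hζ'c.mul hLc)))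
      (hsum_c.mul_right _)
      (fun n => mul_nonneg (mul_nonneg (norm_nonneg _) (max_zpow_nonneg ha'0 _))
        (mul_nonneg hBζ'0 hBL0))
      ?_]
    · have hterm : ∀ n : ℤ, (∮ z in C(0, 1), c n * (ζ z ^ n * (deriv ζ z * L z)))
          = 2 * Real.pi * Complex.I * (c n * c (-n - 1)) := by
        intro n
        rw [circleIntegral.integral_const_mul]
        have hmm : (∮ z in C(0, 1), ζ z ^ n * (deriv ζ z * L z))
            = ∮ z in C(0, 1), ζ z ^ n * deriv ζ z * L z := by
          apply circleIntegral.integral_congr zero_le_one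
          intro z _
          show ζ z ^ n * (deriv ζ z * L z) = ζ z ^ n * deriv ζ z * L z
          ring
        rw [hmm, key1 n]
        ring
      rw [tsum_congr hterm, tsum_mul_left]
    · intro n z hz
      have hb1 := (hbounds z hz).1
      have hb2 := (hbounds z hz).2
      rw [norm_mul, norm_mul, norm_mul, norm_zpow]
      have h1 : ‖ζ z‖ ^ n ≤ max (a' ^ n) (b' ^ n) := by
        exact zpow_le_max ha'0 hb1 hb2 _
      calc ‖c n‖ * (‖ζ z‖ ^ n * (‖deriv ζ z‖ * ‖L z‖))
          ≤ ‖c n‖ * (max (a' ^ n) (b' ^ n) * (Bζ' * BL)) := by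
            apply mul_le_mul_of_nonneg_left _ (norm_nonneg _)
            apply mul_le_mul h1 _ (mul_nonneg (norm_nonneg _) (norm_nonneg _))
              (max_zpow_nonneg ha'0 _)
            exact mul_le_mul (hBζ' z hz) (hBL z hz) (norm_nonneg _) hBζ'0
        _ = (‖c n‖ * max (a' ^ n) (b' ^ n)) * (Bζ' * BL) := by ring
    -- t i = -c i
  have hfcont : ∀ m : ℤ, ContinuousOn (fun z => ζ z ^ m * deriv ζ z * L z) (sphere (0:ℂ) 1) :=
    fun m => ((hζikc m).mul hζ'c).mul hLc
  have tP : ∀ i : ℤ, t i = -c i := by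
    intro i
    by_cases hi0 : i = 0
    · subst hi0
      have hstep : ∀ z ∈ sphere (0:ℂ) 1, HasDerivAt (fun w => L w ^ 2 / 2)
          (ζ z ^ (-1:ℤ) * deriv ζ z * L z - L z / z) z := by
        intro z hz
        have h1 := (hSA z hz).1
        have h2 := (hSA z hz).2
        have hLz := hLA z h1 h2
        have hd := (hLz.pow 2).div_const 2
        refine hd.congr_deriv ?_
        symm
        rw [hrel z h1 h2, zpow_neg_one]
        have hz0 : z ≠ 0 := hsz0 z hz
        have hζ0 : ζ z ≠ 0 := hζsnz z hz
        field_simp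
        ring
      have hzero : (∮ z in C(0, 1), (ζ z ^ (-1:ℤ) * deriv ζ z * L z - L z / z)) = 0 :=
        circleIntegral.integral_eq_zero_of_hasDerivWithinAt zero_le_one
          (fun z hz => (hstep z hz).hasDerivWithinAt)
      have hint1 : CircleIntegrable (fun z => ζ z ^ (-1:ℤ) * deriv ζ z * L z) 0 1 :=
        (hfcont (-1)).circleIntegrable zero_le_one
      have hint2 : CircleIntegrable (fun z => L z / z) 0 1 :=
        (hLc.div continuousOn_id hsz0).circleIntegrable zero_le_one
      rw [circleIntegral.integral_sub hint1 hint2] at hzero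
      have hLz_int : (∮ z in C(0, 1), L z / z) = 2 * Real.pi * Complex.I * c 0 := by
        have hk := key1 (-1)
        rw [show -(-1:ℤ) - 1 = 0 by ring] at hk
        rw [← hk]
        linear_combination -hzero
      rw [ht0, hLz_int]
      field_simp
    · have hi : (i:ℂ) ≠ 0 := Int.cast_ne_zero.mpr hi0
      have hstep : ∀ z ∈ sphere (0:ℂ) 1, HasDerivAt
          (fun w => -(ζ w ^ (-i)) / (i:ℂ) ^ 2 - ζ w ^ (-i) * L w / (i:ℂ))
          (ζ z ^ (-i) / (i:ℂ) / z + ζ z ^ (-i - 1) * deriv ζ z * L z) z := by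
        intro z hz
        have h1 := (hSA z hz).1
        have h2 := (hSA z hz).2
        have hLz := hLA z h1 h2
        have hp := hzpd (-i) z hz
        have hd := ((hp.neg).div_const ((i:ℂ) ^ 2)).sub ((hp.mul hLz).div_const (i:ℂ))
        refine hd.congr_deriv ?_
        symm
        rw [hrel z h1 h2]
        have hz0 : z ≠ 0 := hsz0 z hz
        have hζ0 : ζ z ≠ 0 := hζsnz z hz
        have hsplit : ζ z ^ (-i) = ζ z ^ (-i - 1) * ζ z := by
          rw [← zpow_add_one₀ hζ0]
          congr 1
          ring
        generalize hX : ζ z ^ (-i - 1) = X at hsplit ⊢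
        rw [hsplit]
        push_cast
        field_simp
        ring
      have hzero : (∮ z in C(0, 1),
          (ζ z ^ (-i) / (i:ℂ) / z + ζ z ^ (-i - 1) * deriv ζ z * L z)) = 0 :=
        circleIntegral.integral_eq_zero_of_hasDerivWithinAt zero_le_one
          (fun z hz => (hstep z hz).hasDerivWithinAt)
      have hint1 : CircleIntegrable (fun z => ζ z ^ (-i) / (i:ℂ) / z
          + ζ z ^ (-i - 1) * deriv ζ z * L z) 0 1 := by
        apply ContinuousOn.circleIntegrable zero_le_one
        exact (((hζikc (-i)).div_const _).div continuousOn_id hsz0).add (hfcont (-i - 1))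
      have hint2 : CircleIntegrable (fun z => ζ z ^ (-i - 1) * deriv ζ z * L z) 0 1 :=
        (hfcont (-i - 1)).circleIntegrable zero_le_one
      have hsp : (∮ z in C(0, 1), ζ z ^ (-i) / (i:ℂ) / z)
          = - ∮ z in C(0, 1), ζ z ^ (-i - 1) * deriv ζ z * L z := by
        have hcg : (∮ z in C(0, 1), ζ z ^ (-i) / (i:ℂ) / z)
            = ∮ z in C(0, 1), ((ζ z ^ (-i) / (i:ℂ) / z + ζ z ^ (-i - 1) * deriv ζ z * L z)
              - ζ z ^ (-i - 1) * deriv ζ z * L z) := by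
          apply circleIntegral.integral_congr zero_le_one
          intro z _
          show ζ z ^ (-i) / (i:ℂ) / z = _
          ring
        rw [hcg, circleIntegral.integral_sub hint1 hint2, hzero, zero_sub]
      have hkk := key1 (-i - 1)
      rw [show -(-i - 1) - 1 = i by ring] at hkk
      rw [ht i hi0, hsp, hkk]
      field_simp
  -- the left-hand side via integration by parts
  have hLHS : (∮ z in C(0, 1), ζ z * (L z - 1) / z)
      = 2⁻¹ * (2 * Real.pi * Complex.I * ∑' n : ℤ, c n * c (-n - 1)) := by
    have hstep : ∀ z ∈ sphere (0:ℂ) 1, HasDerivAt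
        (fun w => ζ w * L w - ζ w * L w ^ 2 / 2 - ζ w)
        (ζ z * (L z - 1) / z - 2⁻¹ * (deriv ζ z * L z ^ 2)) z := by
      intro z hz
      have h1 := (hSA z hz).1
      have h2 := (hSA z hz).2
      have hLz := hLA z h1 h2
      have hζz := hζA z h1 h2
      have hd := ((hζz.mul hLz).sub ((hζz.mul (hLz.pow 2)).div_const 2)).sub hζz
      refine hd.congr_deriv ?_
      symm
      rw [hrel z h1 h2]
      have hz0 : z ≠ 0 := hsz0 z hz
      have hζ0 : ζ z ≠ 0 := hζsnz z hz
      field_simp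
      simp only [Pi.pow_apply]
      ring
    have hzero : (∮ z in C(0, 1),
        (ζ z * (L z - 1) / z - 2⁻¹ * (deriv ζ z * L z ^ 2))) = 0 :=
      circleIntegral.integral_eq_zero_of_hasDerivWithinAt zero_le_one
        (fun z hz => (hstep z hz).hasDerivWithinAt)
    have hint1 : CircleIntegrable (fun z => ζ z * (L z - 1) / z) 0 1 := by
      apply ContinuousOn.circleIntegrable zero_le_one
      exact ((hζc.mul (hLc.sub continuousOn_const)).div continuousOn_id hsz0)
    have hint2 : CircleIntegrable (fun z => 2⁻¹ * (deriv ζ z * L z ^ 2)) 0 1 := by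
      apply ContinuousOn.circleIntegrable zero_le_one
      exact continuousOn_const.mul (hζ'c.mul (hLc.pow 2))
    rw [circleIntegral.integral_sub hint1 hint2, circleIntegral.integral_const_mul,
      key2] at hzero
    linear_combination hzero
  -- final assembly
  have haabb : aa / bb < 1 := by
    apply (div_lt_one hbb0).mpr
    linarith
  have haabb0 : 0 ≤ aa / bb := div_nonneg haa0.le hbb0.le
  have hprod : ∀ n : ℕ, ‖c (n:ℤ) * c (-(n:ℤ) - 1)‖ ≤ (Cb * (Ca * aa)) * (aa / bb) ^ n := by
    intro n
    rw [norm_mul]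
    have h1 : ‖c ((n:ℕ):ℤ)‖ ≤ Cb * bb ^ (-(n:ℤ)) := hc_le_b _
    have h2 : ‖c (-(n:ℤ) - 1)‖ ≤ Ca * aa ^ ((n:ℤ) + 1) := by
      have := hc_le_a (-(n:ℤ) - 1)
      rwa [show -(-(n:ℤ) - 1) = (n:ℤ) + 1 by ring] at this
    calc ‖c ((n:ℕ):ℤ)‖ * ‖c (-(n:ℤ) - 1)‖
        ≤ (Cb * bb ^ (-(n:ℤ))) * (Ca * aa ^ ((n:ℤ) + 1)) :=
          mul_le_mul h1 h2 (norm_nonneg _) (by positivity)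
      _ = (Cb * (Ca * aa)) * (aa / bb) ^ n := by
          rw [zpow_neg, zpow_natCast, show ((n:ℤ) + 1) = ((n + 1 : ℕ) : ℤ) by push_cast; ring,
            zpow_natCast, pow_succ, div_pow]
          field_simp
  have hgeom : Summable (fun n : ℕ => (Cb * (Ca * aa)) * (aa / bb) ^ n) :=
    (summable_geometric_of_lt_one haabb0 haabb).mul_left _
  have hsummN : Summable (fun n : ℕ => ‖c (n:ℤ) * c (-(n:ℤ) - 1)‖) :=
    Summable.of_nonneg_of_le (fun n => norm_nonneg _) hprod hgeom
  have htc : ∀ n : ℕ, t (n:ℤ) * t (-(n:ℤ) - 1) = c (n:ℤ) * c (-(n:ℤ) - 1) := by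
    intro n
    rw [tP, tP]
    ring
  constructor
  · have hfx : (fun n : ℕ => ‖t (n:ℤ) * t (-(n:ℤ) - 1)‖)
        = fun n : ℕ => ‖c (n:ℤ) * c (-(n:ℤ) - 1)‖ := by
      funext n
      rw [htc]
    rw [hfx]
    exact hsummN
  · have hsumN' : Summable (fun n : ℕ => c (n:ℤ) * c (-(n:ℤ) - 1)) := hsummN.of_norm
    have hposN : HasSum (fun n : ℕ => c (n:ℤ) * c (-(n:ℤ) - 1))
        (∑' n : ℕ, c (n:ℤ) * c (-(n:ℤ) - 1)) := hsumN'.hasSum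
    have hnegN : HasSum (fun n : ℕ => c (-((n:ℤ) + 1)) * c (-(-((n:ℤ) + 1)) - 1))
        (∑' n : ℕ, c (n:ℤ) * c (-(n:ℤ) - 1)) := by
      have hfx : (fun n : ℕ => c (-((n:ℤ) + 1)) * c (-(-((n:ℤ) + 1)) - 1))
          = fun n : ℕ => c (n:ℤ) * c (-(n:ℤ) - 1) := by
        funext n
        rw [show -(-((n:ℤ) + 1)) - 1 = (n:ℤ) by ring, show -((n:ℤ) + 1) = -(n:ℤ) - 1 by ring]
        ring
      rw [hfx]
      exact hposN
    have hZ := HasSum.of_nat_of_neg_add_one (f := fun n : ℤ => c n * c (-n - 1)) hposN hnegN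
    have hZsum : ∑' n : ℤ, c n * c (-n - 1)
        = (∑' n : ℕ, c (n:ℤ) * c (-(n:ℤ) - 1)) + ∑' n : ℕ, c (n:ℤ) * c (-(n:ℤ) - 1) :=
      hZ.tsum_eq
    rw [tsum_congr htc, hLHS, hZsum]
    field_simp
    try ring
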